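/- The metric space (UAdm, d) of uniform admissible subsets of D with the distance d(p,q) = 2^{-max{i | π_i(p)=π_i(q)}} (and 0 if p=q) is a complete metric space: every Cauchy sequence of uniform admissible subsets has a limit. -/

import Mathlib

open OmegaCompletePartialOrder

/-- A subset of a pointed ω-cpo is uniform admissible w.r.t. projections `π`:
it contains `⊥`, is closed under lubs of ω-chains, and closed under all `π n`. -/
def UniformAdmissible {D : Type*} [OmegaCompletePartialOrder D] [OrderBot D]
    (π : ℕ → D → D) (p : Set D) : Prop :=
  (⊥ : D) ∈ p ∧
  (∀ c : Chain D, (∀ k, c k ∈ p) → ωSup c ∈ p) ∧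
  (∀ h ∈ p, ∀ n, π n h ∈ p)

/-- The set of indices on which the images of `p` and `q` under the projections agree. -/
def agreeSet {D : Type*} (π : ℕ → D → D) (p q : Set D) : Set ℕ :=
  {i | π i '' p = π i '' q}

open Classical in
/-- The distance `d(p,q) = 2^{-max{i | π_i(p)=π_i(q)}}` (and `0` if `p = q`). -/
noncomputable def uDist {D : Type*} (π : ℕ → D → D) (p q : Set D) : ℝ :=
  if p = q then 0 else (2 : ℝ) ^ (-((sSup (agreeSet π p q) : ℕ) : ℤ))


/-- `(UAdm, uDist)` is complete: every Cauchy sequence of uniform admissible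
subsets has a limit. -/
theorem uAdm_complete {D : Type*}
    [OmegaCompletePartialOrder D] [OrderBot D] (π : ℕ → D → D)
    (hmono : ∀ n, Monotone (π n))
    (hcont : ∀ (n : ℕ) (c : Chain D), π n (ωSup c) = ωSup (c.map ⟨π n, hmono n⟩))
    (hcomp : ∀ (n m : ℕ) (x : D), π n (π m x) = π (min n m) x)
    (hbot : ∀ x : D, π 0 x = ⊥)
    (hsup : ∀ (c : Chain D) (x : D), (∀ n, c n = π n x) → ωSup c = x)
    (hfin : ∀ n, (Set.range (π n)).Finite) :
    ∀ F : ℕ → Set D, (∀ k, UniformAdmissible π (F k)) →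
      (∀ ε : ℝ, 0 < ε → ∃ N, ∀ m ≥ N, ∀ n ≥ N, uDist π (F m) (F n) < ε) →
      ∃ L : Set D, UniformAdmissible π L ∧
        ∀ ε : ℝ, 0 < ε → ∃ N, ∀ n ≥ N, uDist π (F n) L < ε := by
  intro F hF hC
  -- basic facts about the projections
  have hbot' : ∀ i, π i (⊥ : D) = ⊥ := by
    intro i
    have h := hcomp i 0 (⊥ : D)
    simpa [hbot] using h
  have hidem : ∀ i (x : D), π i (π i x) = π i x := by
    intro i x; simpa using hcomp i i x
  have himg : ∀ i j, i ≤ j → ∀ s : Set D, π i '' (π j '' s) = π i '' s := by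
    intro i j hij s
    rw [← Set.image_comp]
    have : (π i ∘ π j) = π i := funext fun x => by
      rw [Function.comp_apply, hcomp, min_eq_left hij]
    rw [this]
  have hzero : ∀ p q : Set D, (⊥ : D) ∈ p → (⊥ : D) ∈ q → π 0 '' p = π 0 '' q := by
    have hsingle : ∀ s : Set D, (⊥ : D) ∈ s → π 0 '' s = {⊥} := by
      intro s hs
      apply Set.eq_singleton_iff_unique_mem.2
      constructor
      · exact ⟨⊥, hs, hbot ⊥⟩
      · rintro y ⟨x, hx, rfl⟩; exact hbot x
    intro p q hp hq
    rw [hsingle p hp, hsingle q hq]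
  have hdown : ∀ p q : Set D, ∀ j, π j '' p = π j '' q → ∀ i ≤ j, π i '' p = π i '' q := by
    intro p q j h i hij
    rw [← himg i j hij p, ← himg i j hij q, h]
  -- small distance gives agreement of low projections
  have hlt : ∀ p q : Set D, (⊥ : D) ∈ p → (⊥ : D) ∈ q → ∀ i : ℕ,
      uDist π p q < 2 ^ (-(i : ℤ)) → ∀ j ≤ i, π j '' p = π j '' q := by
    intro p q hp hq i h j hj
    by_cases hpq : p = q
    · rw [hpq]
    rw [uDist, if_neg hpq] at h
    set s := sSup (agreeSet π p q) with hs
    have hsi : i < s := by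
      have := (zpow_lt_zpow_iff_right₀ (one_lt_two : (1:ℝ) < 2)).1 h
      omega
    have hbdd : BddAbove (agreeSet π p q) := by
      by_contra h'
      have hz : s = 0 := by
        rw [hs, csSup_of_not_bddAbove h', csSup_empty]; rfl
      omega
    have hmem : s ∈ agreeSet π p q := Nat.sSup_mem ⟨0, hzero p q hp hq⟩ hbdd
    exact hdown p q s hmem j (by omega)
  -- eventual agreement of projections
  have hKey : ∀ i : ℕ, ∃ Nv, ∀ m ≥ Nv, ∀ n ≥ Nv, ∀ j ≤ i, π j '' F m = π j '' F n := by
    intro i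
    obtain ⟨Nv, h⟩ := hC (2 ^ (-(i : ℤ))) (by positivity)
    exact ⟨Nv, fun m hm n hn =>
      hlt (F m) (F n) (hF m).1 (hF n).1 i (h m hm n hn)⟩
  choose N' hN' using hKey
  set N : ℕ → ℕ := fun i => (Finset.range (i + 1)).sup N' with hNdef
  have hNle : ∀ i, N' i ≤ N i := fun i =>
    Finset.le_sup (Finset.self_mem_range_succ i)
  have hNmono : Monotone N := by
    intro a b hab
    exact Finset.sup_mono (Finset.range_subset_range.2 (by omega))
  set G : ℕ → Set D := fun i => π i '' F (N i) with hGdef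
  have hG : ∀ i n, N i ≤ n → π i '' F n = G i := by
    intro i n hn
    exact hN' i n (le_trans (hNle i) hn) (N i) (hNle i) i le_rfl
  have hGj : ∀ i j, i ≤ j → π i '' F (N j) = G i := by
    intro i j hij
    exact hG i (N j) (hNmono hij)
  have hGF : ∀ i, G i ⊆ F (N i) := by
    rintro i y ⟨x, hx, rfl⟩
    exact (hF (N i)).2.2 x hx i
  have hGmono : ∀ i j, i ≤ j → G i ⊆ G j := by
    intro i j hij y hy
    rw [← hGj i j hij] at hy
    obtain ⟨z, hz, rfl⟩ := hy
    have h1 : π i z ∈ F (N j) := (hF (N j)).2.2 z hz i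
    have h2 : π j (π i z) = π i z := by
      rw [hcomp, min_eq_right hij]
    exact ⟨π i z, h1, h2⟩
  set L : Set D := {x | ∀ i, π i x ∈ G i} with hLdef
  have hGbot : ∀ i, (⊥ : D) ∈ G i := fun i => ⟨⊥, (hF (N i)).1, hbot' i⟩
  -- L is uniform admissible
  have hLUA : UniformAdmissible π L := by
    refine ⟨?_, ?_, ?_⟩
    · intro i
      rw [hbot' i]
      exact hGbot i
    · intro c hc i
      show π i (ωSup c) ∈ G i
      rw [hcont i c]
      set c' := c.map ⟨π i, hmono i⟩ with hc'
      have h1 : ∀ k, c' k ∈ F (N i) := fun k => hGF i (hc k i)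
      have h2 : ωSup c' ∈ F (N i) := (hF (N i)).2.1 c' h1
      have h3 : π i (ωSup c') = ωSup c' := by
        rw [hcont i c']
        congr 1
        apply Chain.ext
        funext k
        show π i (c' k) = c' k
        show π i (π i (c k)) = π i (c k)
        exact hidem i (c k)
      exact ⟨ωSup c', h2, h3⟩
    · intro x hx n i
      show π i (π n x) ∈ G i
      rw [hcomp i n x]
      exact hGmono (min i n) i (min_le_left i n) (hx (min i n))
  have hLimg : ∀ i, π i '' L = G i := by
    intro i
    apply Set.Subset.antisymm
    · rintro y ⟨x, hx, rfl⟩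
      exact hx i
    · rintro y hy
      obtain ⟨z, hz, rfl⟩ := hy
      have hzL : π i z ∈ L := by
        intro j
        rw [hcomp j i z]
        have hm1 : min j i ≤ i := min_le_right j i
        have hm2 : min j i ≤ j := min_le_left j i
        have : π (min j i) z ∈ G (min j i) := by
          rw [← hGj (min j i) i hm1]
          exact ⟨z, hz, rfl⟩
        exact hGmono (min j i) j hm2 this
      exact ⟨π i z, hzL, hidem i z⟩
  have hagree : ∀ i n, N i ≤ n → ∀ j ≤ i, π j '' F n = π j '' L := by
    intro i n hn j hj
    rw [hLimg j]
    exact hG j n (le_trans (hNmono hj) hn)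
  by_cases hbad : ∀ M : ℕ, ∃ n, M ≤ n ∧ F n ≠ L ∧ ∀ j, π j '' F n = π j '' L
  · -- infinitely many fully-agreeing-but-unequal terms: they all coincide, giving the limit
    obtain ⟨N1, hN1⟩ := hC (1 / 2) (by norm_num)
    obtain ⟨n₀, hn₀M, hn₀ne, hn₀ag⟩ := hbad N1
    have hPuniq : ∀ n, N1 ≤ n → F n ≠ L → (∀ j, π j '' F n = π j '' L) → F n = F n₀ := by
      intro n hn hne hag
      by_contra hcon
      have hA : agreeSet π (F n) (F n₀) = Set.univ := by
        apply Set.eq_univ_iff_forall.2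
        intro j
        exact (hag j).trans (hn₀ag j).symm
      have hnb : ¬ BddAbove (Set.univ : Set ℕ) := fun ⟨b, hb⟩ => by
        have := hb (Set.mem_univ (b + 1)); omega
      have hone : uDist π (F n) (F n₀) = 1 := by
        rw [uDist, if_neg hcon, hA, csSup_of_not_bddAbove hnb, csSup_empty]
        norm_num
      have := hN1 n hn n₀ hn₀M
      rw [hone] at this
      norm_num at this
    refine ⟨F n₀, hF n₀, ?_⟩
    intro ε hε
    obtain ⟨N2, hN2⟩ := hC ε hε
    refine ⟨max N1 N2, fun m hm => ?_⟩
    obtain ⟨n, hnM, hnne, hnag⟩ := hbad (max N1 N2)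
    have heq : F n = F n₀ :=
      hPuniq n (le_trans (le_max_left _ _) hnM) hnne hnag
    rw [← heq]
    exact hN2 m (le_trans (le_max_right _ _) hm) n (le_trans (le_max_right _ _) hnM)
  · -- eventually every term either equals L or disagrees at some projection
    push_neg at hbad
    obtain ⟨M₀, hM₀⟩ := hbad
    refine ⟨L, hLUA, ?_⟩
    intro ε hε
    obtain ⟨i, hi⟩ : ∃ i : ℕ, (2:ℝ) ^ (-(i : ℤ)) < ε := by
      obtain ⟨i, hi⟩ := exists_pow_lt_of_lt_one hε (by norm_num : (1:ℝ)/2 < 1)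
      refine ⟨i, ?_⟩
      have : (2:ℝ) ^ (-(i:ℤ)) = (1/2) ^ i := by
        rw [zpow_neg, zpow_natCast, one_div, inv_pow]
      rw [this]; exact hi
    refine ⟨max M₀ (N i), fun n hn => ?_⟩
    by_cases heq : F n = L
    · rw [uDist, if_pos heq]; exact hε
    · obtain ⟨j₀, hj₀⟩ := hM₀ n (le_trans (le_max_left _ _) hn) heq
      have hmemi : ∀ j ≤ i, j ∈ agreeSet π (F n) L :=
        fun j hj => hagree i n (le_trans (le_max_right _ _) hn) j hj
      have hbdd : BddAbove (agreeSet π (F n) L) := by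
        refine ⟨j₀, fun a ha => ?_⟩
        by_contra hcon
        push_neg at hcon
        exact hj₀ (hdown (F n) L a ha j₀ (le_of_lt hcon))
      have hsup_ge : i ≤ sSup (agreeSet π (F n) L) :=
        le_csSup hbdd (hmemi i le_rfl)
      rw [uDist, if_neg heq]
      calc (2:ℝ) ^ (-((sSup (agreeSet π (F n) L) : ℕ) : ℤ))
          ≤ 2 ^ (-(i : ℤ)) := by
            apply zpow_le_zpow_right₀ one_le_two
            omega
        _ < ε := hi
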